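/- Let A be a finite-dimensional left-symmetric color algebra over k with respect to ε, let p ≥ 2, and let f_0 = μ, f_1, …, f_{p−1} be 2-cochains of degree 0 such that for every 0 ≤ q ≤ p−1 and all homogeneous x,y,z ∈ A: Σ_{i+j=q, i,j≥0} ( f_i(f_j(x,y),z) − f_i(x,f_j(y,z)) − ε(|x|,|y|)( f_i(f_j(y,x),z) − f_i(y,f_j(x,z)) ) ) = 0 (i.e., F_{λ,p−1} = Σ_{i=0}^{p−1} λ^i f_i satisfies the left-symmetric color identity modulo λ^p). Then the 3-cochain g := Σ_{i=1}^{p−1} f_i∗f_{p−i} of degree 0 satisfies d₃(g) = 0, i.e., g is a 3-cocycle of degree 0. -/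

import Mathlib

open scoped TensorProduct

/-- A skew-symmetric bicharacter of an abelian group `G` over a field `k`. -/
structure Bicharacter (G : Type*) (k : Type*) [AddCommGroup G] [Field k] where
  ε : G → G → k
  ne_zero : ∀ a b : G, ε a b ≠ 0
  add_left : ∀ a b c : G, ε (a + b) c = ε a c * ε b c
  add_right : ∀ a b c : G, ε a (b + c) = ε a b * ε a c
  skew : ∀ a b : G, ε a b * ε b a = 1

/-- `(A, 𝒜, μ)` is a left-symmetric color algebra over `k` with respect to the
skew-symmetric bicharacter `ε`: the grading `𝒜` is an internal direct sum
decomposition of `A`, the multiplication `μ` respects the grading, and the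
left-symmetric color identity holds on homogeneous elements. -/
structure IsLSCA {G k A : Type*} [AddCommGroup G] [DecidableEq G] [Field k]
    [AddCommGroup A] [Module k A]
    (ε : Bicharacter G k) (𝒜 : G → Submodule k A) (μ : A →ₗ[k] A →ₗ[k] A) : Prop where
  internal : DirectSum.IsInternal 𝒜
  graded_mul : ∀ a b : G, ∀ x ∈ 𝒜 a, ∀ y ∈ 𝒜 b, μ x y ∈ 𝒜 (a + b)
  left_symm : ∀ a b c : G, ∀ x ∈ 𝒜 a, ∀ y ∈ 𝒜 b, ∀ z ∈ 𝒜 c,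
    μ (μ x y) z - μ x (μ y z) = ε.ε a b • (μ (μ y x) z - μ y (μ x z))

/-- The value on homogeneous elements (of degrees `a` and `b` in the first two slots)
of the 3-cochain `Σ_{i=1}^{p−1} f_i ∗ f_{p−i}`, where
`(f∗g)(x,y,z) = f(g(x,y),z) − f(x,g(y,z)) − ε(|x|,|y|)(f(g(y,x),z) − f(y,g(x,z)))`. -/
def starSum {G k A : Type*} [AddCommGroup G] [Field k] [AddCommGroup A] [Module k A]
    (ε : Bicharacter G k) (f : ℕ → (A →ₗ[k] A →ₗ[k] A)) (p : ℕ)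
    (a b : G) (x y z : A) : A :=
  ∑ i ∈ Finset.Ico 1 p,
    (f i (f (p - i) x y) z - f i x (f (p - i) y z)
      - ε.ε a b • (f i (f (p - i) y x) z - f i y (f (p - i) x z)))

section Aux
variable {G k A : Type*} [AddCommGroup G] [Field k] [AddCommGroup A] [Module k A]

def StF (ε : Bicharacter G k) (V W : A →ₗ[k] A →ₗ[k] A) (a b : G) (x y z : A) : A :=
  V (W x y) z - V x (W y z) - ε.ε a b • (V (W y x) z - V y (W x z))

def D12 (ε : Bicharacter G k) (m : A →ₗ[k] A →ₗ[k] A) (g : G → G → A → A → A → A)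
    (a1 a2 a3 a4 : G) (x1 x2 x3 x4 : A) : A :=
  m x1 (g a2 a3 x2 x3 x4)
  - ε.ε a1 a2 • m x2 (g a1 a3 x1 x3 x4)
  + ε.ε (a1 + a2) a3 • m x3 (g a1 a2 x1 x2 x4)
  + ε.ε a1 (a2 + a3) • m (g a2 a3 x2 x3 x1) x4
  - ε.ε a2 a3 • m (g a1 a3 x1 x3 x2) x4
  + m (g a1 a2 x1 x2 x3) x4
  - ε.ε a1 (a2 + a3) • g a2 a3 x2 x3 (m x1 x4)
  + ε.ε a2 a3 • g a1 a3 x1 x3 (m x2 x4)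
  - g a1 a2 x1 x2 (m x3 x4)
  - g (a1 + a2) a3 (m x1 x2 - ε.ε a1 a2 • m x2 x1) x3 x4
  + ε.ε a2 a3 • g (a1 + a3) a2 (m x1 x3 - ε.ε a1 a3 • m x3 x1) x2 x4
  + g a1 (a2 + a3) x1 (m x2 x3 - ε.ε a2 a3 • m x3 x2) x4

theorem Dadd (ε : Bicharacter G k) (m : A →ₗ[k] A →ₗ[k] A)
    (g1 g2 : G → G → A → A → A → A) (a1 a2 a3 a4 : G) (x1 x2 x3 x4 : A) :
    D12 ε m (fun a b x y z => g1 a b x y z + g2 a b x y z) a1 a2 a3 a4 x1 x2 x3 x4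
      = D12 ε m g1 a1 a2 a3 a4 x1 x2 x3 x4 + D12 ε m g2 a1 a2 a3 a4 x1 x2 x3 x4 := by
  simp only [D12, map_add, LinearMap.add_apply, smul_add]
  abel

theorem Dzero (ε : Bicharacter G k) (m : A →ₗ[k] A →ₗ[k] A)
    (a1 a2 a3 a4 : G) (x1 x2 x3 x4 : A) :
    D12 ε m (fun _ _ _ _ _ => (0 : A)) a1 a2 a3 a4 x1 x2 x3 x4 = 0 := by
  simp [D12]

theorem Dpush {ι : Type*} (s : Finset ι) (ε : Bicharacter G k) (m : A →ₗ[k] A →ₗ[k] A)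
    (g : ι → G → G → A → A → A → A) (a1 a2 a3 a4 : G) (x1 x2 x3 x4 : A) :
    D12 ε m (fun a b x y z => ∑ t ∈ s, g t a b x y z) a1 a2 a3 a4 x1 x2 x3 x4
      = ∑ t ∈ s, D12 ε m (g t) a1 a2 a3 a4 x1 x2 x3 x4 := by
  classical
  induction s using Finset.cons_induction with
  | empty => simpa using Dzero ε m a1 a2 a3 a4 x1 x2 x3 x4
  | cons t s hts ih =>
      rw [Finset.sum_cons]
      simp only [Finset.sum_cons]
      rw [Dadd ε m (g t) (fun a b x y z => ∑ r ∈ s, g r a b x y z) a1 a2 a3 a4 x1 x2 x3 x4, ih]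

theorem cycSum (p : ℕ) (F : ℕ → ℕ → ℕ → A) :
    ∑ x ∈ (Finset.HasAntidiagonal.antidiagonal p).sigma (fun iq => Finset.HasAntidiagonal.antidiagonal iq.2),
        F x.2.1 x.2.2 x.1.1
      = ∑ x ∈ (Finset.HasAntidiagonal.antidiagonal p).sigma (fun iq => Finset.HasAntidiagonal.antidiagonal iq.2),
        F x.1.1 x.2.1 x.2.2 := by
  refine Finset.sum_nbij' (i := fun x => ⟨(x.2.1, x.2.2 + x.1.1), (x.2.2, x.1.1)⟩)
    (j := fun x => ⟨(x.2.2, x.1.1 + x.2.1), (x.1.1, x.2.1)⟩) ?_ ?_ ?_ ?_ (fun x _ => rfl)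
  · rintro ⟨⟨i, q⟩, j, l⟩ hx
    simp only [Finset.mem_sigma, Finset.HasAntidiagonal.mem_antidiagonal, and_true, true_and] at hx ⊢
    omega
  · rintro ⟨⟨i, q⟩, j, l⟩ hx
    simp only [Finset.mem_sigma, Finset.HasAntidiagonal.mem_antidiagonal, and_true, true_and] at hx ⊢
    omega
  · rintro ⟨⟨i, q⟩, j, l⟩ hx
    simp only [Finset.mem_sigma, Finset.HasAntidiagonal.mem_antidiagonal] at hx
    obtain ⟨h1, h2⟩ := hx
    subst h2
    rfl
  · rintro ⟨⟨i, q⟩, j, l⟩ hx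
    simp only [Finset.mem_sigma, Finset.HasAntidiagonal.mem_antidiagonal] at hx
    obtain ⟨h1, h2⟩ := hx
    subst h2
    rfl

theorem swpSum (p : ℕ) (F : ℕ → ℕ → ℕ → A) :
    ∑ x ∈ (Finset.HasAntidiagonal.antidiagonal p).sigma (fun iq => Finset.HasAntidiagonal.antidiagonal iq.2),
        F x.2.2 x.2.1 x.1.1
      = ∑ x ∈ (Finset.HasAntidiagonal.antidiagonal p).sigma (fun iq => Finset.HasAntidiagonal.antidiagonal iq.2),
        F x.1.1 x.2.1 x.2.2 := by
  refine Finset.sum_nbij' (i := fun x => ⟨(x.2.2, x.2.1 + x.1.1), (x.2.1, x.1.1)⟩)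
    (j := fun x => ⟨(x.2.2, x.2.1 + x.1.1), (x.2.1, x.1.1)⟩) ?_ ?_ ?_ ?_ (fun x _ => rfl)
  · rintro ⟨⟨i, q⟩, j, l⟩ hx
    simp only [Finset.mem_sigma, Finset.HasAntidiagonal.mem_antidiagonal, and_true, true_and] at hx ⊢
    omega
  · rintro ⟨⟨i, q⟩, j, l⟩ hx
    simp only [Finset.mem_sigma, Finset.HasAntidiagonal.mem_antidiagonal, and_true, true_and] at hx ⊢
    omega
  · rintro ⟨⟨i, q⟩, j, l⟩ hx
    simp only [Finset.mem_sigma, Finset.HasAntidiagonal.mem_antidiagonal] at hx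
    obtain ⟨h1, h2⟩ := hx
    subst h2
    rfl
  · rintro ⟨⟨i, q⟩, j, l⟩ hx
    simp only [Finset.mem_sigma, Finset.HasAntidiagonal.mem_antidiagonal] at hx
    obtain ⟨h1, h2⟩ := hx
    subst h2
    rfl

/-- First-member chain part. -/
def Cc (ε : Bicharacter G k) (U V W : A →ₗ[k] A →ₗ[k] A) (a1 a2 a3 : G)
    (x1 x2 x3 x4 : A) : A :=
  (U x1 (V (W x2 x3) x4))
    - (U x1 (V x2 (W x3 x4)))
    - (ε.ε a2 a3) • (U x1 (V (W x3 x2) x4))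
    + (ε.ε a2 a3) • (U x1 (V x3 (W x2 x4)))
    - (ε.ε a1 a2) • (U x2 (V (W x1 x3) x4))
    + (ε.ε a1 a2) • (U x2 (V x1 (W x3 x4)))
    + (ε.ε a1 a2 * ε.ε a1 a3) • (U x2 (V (W x3 x1) x4))
    - (ε.ε a1 a2 * ε.ε a1 a3) • (U x2 (V x3 (W x1 x4)))
    + (ε.ε a1 a3 * ε.ε a2 a3) • (U x3 (V (W x1 x2) x4))
    - (ε.ε a1 a3 * ε.ε a2 a3) • (U x3 (V x1 (W x2 x4)))
    - (ε.ε a1 a2 * ε.ε a1 a3 * ε.ε a2 a3) • (U x3 (V (W x2 x1) x4))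
    + (ε.ε a1 a2 * ε.ε a1 a3 * ε.ε a2 a3) • (U x3 (V x2 (W x1 x4)))
    + (ε.ε a1 a2 * ε.ε a1 a3) • (U (V (W x2 x3) x1) x4)
    - (ε.ε a1 a2 * ε.ε a1 a3) • (U (V x2 (W x3 x1)) x4)
    - (ε.ε a1 a2 * ε.ε a1 a3 * ε.ε a2 a3) • (U (V (W x3 x2) x1) x4)
    + (ε.ε a1 a2 * ε.ε a1 a3 * ε.ε a2 a3) • (U (V x3 (W x2 x1)) x4)
    - (ε.ε a2 a3) • (U (V (W x1 x3) x2) x4)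
    + (ε.ε a2 a3) • (U (V x1 (W x3 x2)) x4)
    + (ε.ε a1 a3 * ε.ε a2 a3) • (U (V (W x3 x1) x2) x4)
    - (ε.ε a1 a3 * ε.ε a2 a3) • (U (V x3 (W x1 x2)) x4)
    + (U (V (W x1 x2) x3) x4)
    - (U (V x1 (W x2 x3)) x4)
    - (ε.ε a1 a2) • (U (V (W x2 x1) x3) x4)
    + (ε.ε a1 a2) • (U (V x2 (W x1 x3)) x4)

/-- First-member branch part. -/
def Ss (ε : Bicharacter G k) (U V W : A →ₗ[k] A →ₗ[k] A) (a1 a2 a3 : G)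
    (x1 x2 x3 x4 : A) : A :=
  - (ε.ε a1 a2 * ε.ε a1 a3) • (V (W x2 x3) (U x1 x4))
    + (ε.ε a1 a2 * ε.ε a1 a3 * ε.ε a2 a3) • (V (W x3 x2) (U x1 x4))
    + (ε.ε a2 a3) • (V (W x1 x3) (U x2 x4))
    - (ε.ε a1 a3 * ε.ε a2 a3) • (V (W x3 x1) (U x2 x4))
    - (V (W x1 x2) (U x3 x4))
    + (ε.ε a1 a2) • (V (W x2 x1) (U x3 x4))

set_option maxHeartbeats 1000000 in
theorem pointwiseKey (ε : Bicharacter G k) (U V W : A →ₗ[k] A →ₗ[k] A)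
    (a1 a2 a3 a4 : G) (x1 x2 x3 x4 : A) :
    D12 ε U (StF ε V W) a1 a2 a3 a4 x1 x2 x3 x4
      = Cc ε U V W a1 a2 a3 x1 x2 x3 x4 - Cc ε V W U a1 a2 a3 x1 x2 x3 x4
        + Ss ε U V W a1 a2 a3 x1 x2 x3 x4 - Ss ε W V U a1 a2 a3 x1 x2 x3 x4 := by
  have n23 : ε.ε a2 a3 ≠ 0 := ε.ne_zero _ _
  have h32 : ε.ε a3 a2 = (ε.ε a2 a3)⁻¹ := eq_inv_of_mul_eq_one_left (ε.skew a3 a2)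
  simp only [D12, StF, Cc, Ss, map_sub, map_smul, LinearMap.sub_apply, LinearMap.smul_apply,
    smul_sub, smul_smul, ε.add_left, ε.add_right, h32]
  match_scalars <;> field_simp <;> ring1


set_option maxHeartbeats 1000000 in
theorem masterKey (ε : Bicharacter G k) (v : ℕ → A →ₗ[k] A →ₗ[k] A) (p : ℕ)
    (a1 a2 a3 a4 : G) (x1 x2 x3 x4 : A) :
    ∑ iq ∈ Finset.HasAntidiagonal.antidiagonal p, ∑ jk ∈ Finset.HasAntidiagonal.antidiagonal iq.2,
      D12 ε (v iq.1) (StF ε (v jk.1) (v jk.2)) a1 a2 a3 a4 x1 x2 x3 x4 = 0 := by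
  rw [Finset.sum_sigma']
  rw [Finset.sum_congr rfl (fun x _ =>
    pointwiseKey ε (v x.1.1) (v x.2.1) (v x.2.2) a1 a2 a3 a4 x1 x2 x3 x4)]
  simp only [Finset.sum_sub_distrib, Finset.sum_add_distrib]
  rw [cycSum p (fun i j l => Cc ε (v i) (v j) (v l) a1 a2 a3 x1 x2 x3 x4),
      swpSum p (fun i j l => Ss ε (v i) (v j) (v l) a1 a2 a3 x1 x2 x3 x4)]
  abel

end Aux

/-- Let `p ≥ 2` and let `f₀ = μ, f₁, …, f_{p−1}` be 2-cochains of
degree 0 on the finite-dimensional left-symmetric color algebra `A` satisfying the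
deformation coefficient equations up to order `p − 1`.  Then the degree-0 3-cochain
`g := Σ_{i=1}^{p−1} f_i ∗ f_{p−i}` is a 3-cocycle of degree 0, i.e. `d₃(g) = 0` on
homogeneous elements. -/
theorem obstruction_is_three_cocycle {G k A : Type*} [AddCommGroup G] [DecidableEq G]
    [Field k] [AddCommGroup A] [Module k A] [FiniteDimensional k A]
    (ε : Bicharacter G k) (𝒜 : G → Submodule k A) (μ : A →ₗ[k] A →ₗ[k] A)
    (hA : IsLSCA ε 𝒜 μ)
    (p : ℕ) (hp : 2 ≤ p) (f : ℕ → (A →ₗ[k] A →ₗ[k] A)) (hf0 : f 0 = μ)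
    (hfgr : ∀ (i : ℕ) (a b : G), ∀ x ∈ 𝒜 a, ∀ y ∈ 𝒜 b, f i x y ∈ 𝒜 (a + b))
    (hcoef : ∀ q : ℕ, q ≤ p - 1 → ∀ a b c : G, ∀ x ∈ 𝒜 a, ∀ y ∈ 𝒜 b, ∀ z ∈ 𝒜 c,
      ∑ ij ∈ Finset.HasAntidiagonal.antidiagonal q,
        (f ij.1 (f ij.2 x y) z - f ij.1 x (f ij.2 y z)
          - ε.ε a b • (f ij.1 (f ij.2 y x) z - f ij.1 y (f ij.2 x z))) = 0) :
    ∀ a1 a2 a3 a4 : G, ∀ x1 ∈ 𝒜 a1, ∀ x2 ∈ 𝒜 a2, ∀ x3 ∈ 𝒜 a3, ∀ x4 ∈ 𝒜 a4,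
      μ x1 (starSum ε f p a2 a3 x2 x3 x4)
      - ε.ε a1 a2 • μ x2 (starSum ε f p a1 a3 x1 x3 x4)
      + ε.ε (a1 + a2) a3 • μ x3 (starSum ε f p a1 a2 x1 x2 x4)
      + ε.ε a1 (a2 + a3) • μ (starSum ε f p a2 a3 x2 x3 x1) x4
      - ε.ε a2 a3 • μ (starSum ε f p a1 a3 x1 x3 x2) x4
      + μ (starSum ε f p a1 a2 x1 x2 x3) x4
      - ε.ε a1 (a2 + a3) • starSum ε f p a2 a3 x2 x3 (μ x1 x4)
      + ε.ε a2 a3 • starSum ε f p a1 a3 x1 x3 (μ x2 x4)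
      - starSum ε f p a1 a2 x1 x2 (μ x3 x4)
      - starSum ε f p (a1 + a2) a3 (μ x1 x2 - ε.ε a1 a2 • μ x2 x1) x3 x4
      + ε.ε a2 a3 • starSum ε f p (a1 + a3) a2 (μ x1 x3 - ε.ε a1 a3 • μ x3 x1) x2 x4
      + starSum ε f p a1 (a2 + a3) x1 (μ x2 x3 - ε.ε a2 a3 • μ x3 x2) x4 = 0 := by
  intro a1 a2 a3 a4 x1 hx1 x2 hx2 x3 hx3 x4 hx4
  have hp0 : 0 < p := by omega
  set u : ℕ → A →ₗ[k] A →ₗ[k] A := fun n => if n < p then f n else 0 with hu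
  have hu0 : u 0 = μ := by simp [hu, hp0, hf0]
  have hup : u p = 0 := by simp [hu]
  have humem : ∀ (n : ℕ) (a b : G) (x y : A), x ∈ 𝒜 a → y ∈ 𝒜 b →
      u n x y ∈ 𝒜 (a + b) := by
    intro n a b x y hx hy
    by_cases h : n < p
    · simpa [hu, h] using hfgr n a b x hx y hy
    · simp only [hu, h, if_false, LinearMap.zero_apply]
      exact Submodule.zero_mem _
  have hstar : starSum ε f p = fun a b x y z =>
      ∑ jk ∈ Finset.HasAntidiagonal.antidiagonal p, StF ε (u jk.1) (u jk.2) a b x y z := by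
    funext a b x y z
    simp only [starSum]
    rw [Finset.Nat.sum_antidiagonal_eq_sum_range_succ_mk, Finset.sum_range_succ]
    have hlast : StF ε (u p) (u (p - p)) a b x y z = 0 := by simp [StF, hup]
    rw [hlast, add_zero, Finset.range_eq_Ico, Finset.sum_eq_sum_Ico_succ_bot hp0]
    have hfirst : StF ε (u 0) (u (p - 0)) a b x y z = 0 := by
      have : p - 0 = p := by omega
      simp [StF, this, hup]
    rw [hfirst, zero_add]
    refine Finset.sum_congr rfl fun i hi => ?_
    rw [Finset.mem_Ico] at hi
    have h1 : i < p := hi.2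
    have h2 : p - i < p := by omega
    simp [StF, hu, h1, h2]
  have key : ∑ jk ∈ Finset.HasAntidiagonal.antidiagonal p,
      D12 ε (u 0) (StF ε (u jk.1) (u jk.2)) a1 a2 a3 a4 x1 x2 x3 x4 = 0 := by
    have hm := masterKey ε u p a1 a2 a3 a4 x1 x2 x3 x4
    have hvan : ∀ iq ∈ Finset.HasAntidiagonal.antidiagonal p, iq ≠ ((0 : ℕ), p) →
        ∑ jk ∈ Finset.HasAntidiagonal.antidiagonal iq.2,
          D12 ε (u iq.1) (StF ε (u jk.1) (u jk.2)) a1 a2 a3 a4 x1 x2 x3 x4 = 0 := by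
      intro iq hiq hne
      obtain ⟨i, q⟩ := iq
      rw [Finset.HasAntidiagonal.mem_antidiagonal] at hiq
      have hi1 : 1 ≤ i := by
        rcases Nat.eq_zero_or_pos i with h | h
        · exfalso; apply hne; simp [h]; omega
        · exact h
      have hqp : q ≤ p - 1 := by omega
      have hgq : ∀ (a b c : G) (x y z : A), x ∈ 𝒜 a → y ∈ 𝒜 b → z ∈ 𝒜 c →
          ∑ jk ∈ Finset.HasAntidiagonal.antidiagonal q, StF ε (u jk.1) (u jk.2) a b x y z = 0 := by
        intro a b c x y z hx hy hz
        have hcg : ∀ jk ∈ Finset.HasAntidiagonal.antidiagonal q, StF ε (u jk.1) (u jk.2) a b x y z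
            = f jk.1 (f jk.2 x y) z - f jk.1 x (f jk.2 y z)
              - ε.ε a b • (f jk.1 (f jk.2 y x) z - f jk.1 y (f jk.2 x z)) := by
          intro jk hjk
          rw [Finset.HasAntidiagonal.mem_antidiagonal] at hjk
          have h1 : jk.1 < p := by omega
          have h2 : jk.2 < p := by omega
          simp [StF, hu, h1, h2]
        rw [Finset.sum_congr rfl hcg]
        exact hcoef q hqp a b c x hx y hy z hz
      calc ∑ jk ∈ Finset.HasAntidiagonal.antidiagonal q,
            D12 ε (u i) (StF ε (u jk.1) (u jk.2)) a1 a2 a3 a4 x1 x2 x3 x4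
          = D12 ε (u i) (fun a b x y z =>
              ∑ jk ∈ Finset.HasAntidiagonal.antidiagonal q, StF ε (u jk.1) (u jk.2) a b x y z)
              a1 a2 a3 a4 x1 x2 x3 x4 :=
            (Dpush (Finset.HasAntidiagonal.antidiagonal q) ε (u i)
              (fun jk => StF ε (u jk.1) (u jk.2)) a1 a2 a3 a4 x1 x2 x3 x4).symm
        _ = 0 := by
            simp only [D12]
            rw [hgq a2 a3 a4 x2 x3 x4 hx2 hx3 hx4,
                hgq a1 a3 a4 x1 x3 x4 hx1 hx3 hx4,
                hgq a1 a2 a4 x1 x2 x4 hx1 hx2 hx4,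
                hgq a2 a3 a1 x2 x3 x1 hx2 hx3 hx1,
                hgq a1 a3 a2 x1 x3 x2 hx1 hx3 hx2,
                hgq a1 a2 a3 x1 x2 x3 hx1 hx2 hx3,
                hgq a2 a3 (a1 + a4) x2 x3 (u i x1 x4) hx2 hx3
                  (humem i a1 a4 x1 x4 hx1 hx4),
                hgq a1 a3 (a2 + a4) x1 x3 (u i x2 x4) hx1 hx3
                  (humem i a2 a4 x2 x4 hx2 hx4),
                hgq a1 a2 (a3 + a4) x1 x2 (u i x3 x4) hx1 hx2
                  (humem i a3 a4 x3 x4 hx3 hx4),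
                hgq (a1 + a2) a3 a4 (u i x1 x2 - ε.ε a1 a2 • u i x2 x1) x3 x4
                  (sub_mem (humem i a1 a2 x1 x2 hx1 hx2)
                    (Submodule.smul_mem _ _ (add_comm a2 a1 ▸ humem i a2 a1 x2 x1 hx2 hx1))) hx3 hx4,
                hgq (a1 + a3) a2 a4 (u i x1 x3 - ε.ε a1 a3 • u i x3 x1) x2 x4
                  (sub_mem (humem i a1 a3 x1 x3 hx1 hx3)
                    (Submodule.smul_mem _ _ (add_comm a3 a1 ▸ humem i a3 a1 x3 x1 hx3 hx1))) hx2 hx4,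
                hgq a1 (a2 + a3) a4 x1 (u i x2 x3 - ε.ε a2 a3 • u i x3 x2) x4 hx1
                  (sub_mem (humem i a2 a3 x2 x3 hx2 hx3)
                    (Submodule.smul_mem _ _ (add_comm a3 a2 ▸ humem i a3 a2 x3 x2 hx3 hx2))) hx4]
            simp
    rw [Finset.sum_eq_single_of_mem ((0 : ℕ), p) (by simp) hvan] at hm
    simpa using hm
  calc μ x1 (starSum ε f p a2 a3 x2 x3 x4)
      - ε.ε a1 a2 • μ x2 (starSum ε f p a1 a3 x1 x3 x4)
      + ε.ε (a1 + a2) a3 • μ x3 (starSum ε f p a1 a2 x1 x2 x4)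
      + ε.ε a1 (a2 + a3) • μ (starSum ε f p a2 a3 x2 x3 x1) x4
      - ε.ε a2 a3 • μ (starSum ε f p a1 a3 x1 x3 x2) x4
      + μ (starSum ε f p a1 a2 x1 x2 x3) x4
      - ε.ε a1 (a2 + a3) • starSum ε f p a2 a3 x2 x3 (μ x1 x4)
      + ε.ε a2 a3 • starSum ε f p a1 a3 x1 x3 (μ x2 x4)
      - starSum ε f p a1 a2 x1 x2 (μ x3 x4)
      - starSum ε f p (a1 + a2) a3 (μ x1 x2 - ε.ε a1 a2 • μ x2 x1) x3 x4
      + ε.ε a2 a3 • starSum ε f p (a1 + a3) a2 (μ x1 x3 - ε.ε a1 a3 • μ x3 x1) x2 x4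
      + starSum ε f p a1 (a2 + a3) x1 (μ x2 x3 - ε.ε a2 a3 • μ x3 x2) x4
      = D12 ε μ (starSum ε f p) a1 a2 a3 a4 x1 x2 x3 x4 := by rw [D12]
    _ = D12 ε (u 0) (fun a b x y z =>
          ∑ jk ∈ Finset.HasAntidiagonal.antidiagonal p, StF ε (u jk.1) (u jk.2) a b x y z)
          a1 a2 a3 a4 x1 x2 x3 x4 := by rw [hstar, hu0]
    _ = ∑ jk ∈ Finset.HasAntidiagonal.antidiagonal p,
          D12 ε (u 0) (StF ε (u jk.1) (u jk.2)) a1 a2 a3 a4 x1 x2 x3 x4 :=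
        Dpush (Finset.HasAntidiagonal.antidiagonal p) ε (u 0)
          (fun jk => StF ε (u jk.1) (u jk.2)) a1 a2 a3 a4 x1 x2 x3 x4
    _ = 0 := key
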